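/- Let p(·) ∈ P(ℝ^n) ∩ LH(ℝ^n) with p_+ < ∞. If f ∈ L^{p(·)}(ℝ^n), then M_{p(·)} f(x) < ∞ for almost every x ∈ ℝ^n, where M_{p(·)} f(x) = sup_{Q ∋ x} ‖f 1_Q‖_{L^{p(·)}} / ‖1_Q‖_{L^{p(·)}}, the supremum ranging over cubes containing x. -/

import Mathlib

open MeasureTheory ENNReal

noncomputable section

abbrev Euc (n : ℕ) := EuclideanSpace ℝ (Fin n)

/-- The half-open cube with lower-left corner `a` and side length `ℓ`,
with sides parallel to the coordinate axes. -/
def cube {n : ℕ} (a : Euc n) (ℓ : ℝ) : Set (Euc n) :=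
  WithLp.ofLp ⁻¹' (Set.univ.pi fun i => Set.Ico (a i) (a i + ℓ))

/-- Local log-Hölder continuity with constant `C0`. -/
def LocLH {n : ℕ} (r : Euc n → ℝ) (C0 : ℝ) : Prop :=
  ∀ x y : Euc n, dist x y < 1 / 2 → |r x - r y| ≤ C0 / (-Real.log (dist x y))

/-- Log-Hölder continuity at infinity with constant `Ci` and limit value `rinf`. -/
def InfLH {n : ℕ} (r : Euc n → ℝ) (Ci rinf : ℝ) : Prop :=
  ∀ x : Euc n, |r x - rinf| ≤ Ci / Real.log (Real.exp 1 + ‖x‖)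

/-- The modular of a variable Lebesgue space with (extended-real valued) exponent `p`:
the integral of `f ^ p` over the set where `p` is finite plus the essential supremum
of `f` over the set where `p = ∞`. -/
def modularE {n : ℕ} (p : Euc n → ℝ≥0∞) (f : Euc n → ℝ≥0∞) : ℝ≥0∞ :=
  (∫⁻ x in {x | p x ≠ ∞}, f x ^ (p x).toReal) +
    essSup f (volume.restrict {x | p x = ∞})

/-- The Luxemburg norm of the variable Lebesgue space `L^{p(·)}(ℝⁿ)`. -/
def luxNormE {n : ℕ} (p : Euc n → ℝ≥0∞) (f : Euc n → ℝ≥0∞) : ℝ≥0∞ :=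
  sInf {l : ℝ≥0∞ | l ≠ 0 ∧ modularE p (fun x => f x / l) ≤ 1}

/-- The norm-average maximal operator `M_{p(·)} f(x) = sup_{Q ∋ x} ‖f 1_Q‖ / ‖1_Q‖`. -/
def MnormAvg {n : ℕ} (p : Euc n → ℝ≥0∞) (f : Euc n → ℝ≥0∞) (x : Euc n) : ℝ≥0∞ :=
  ⨆ (a : Euc n) (ℓ : ℝ) (_ : 0 < ℓ) (_ : x ∈ cube a ℓ),
    luxNormE p (fun y => (cube a ℓ).indicator f y) /
      luxNormE p ((cube a ℓ).indicator fun _ => 1)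

section Helpers

variable {n : ℕ}

lemma cube_measurableSet (a : Euc n) (ℓ : ℝ) : MeasurableSet (cube a ℓ) :=
  (MeasurableSet.univ_pi fun _ => measurableSet_Ico).preimage (WithLp.measurable_ofLp 2 _)

lemma volume_cube (a : Euc n) {ℓ : ℝ} (hℓ : 0 ≤ ℓ) :
    volume (cube a ℓ) = ENNReal.ofReal ℓ ^ n := by
  have h := (EuclideanSpace.volume_preserving_symm_measurableEquiv_toLp (Fin n)).measure_preimage
    (s := Set.univ.pi fun i => Set.Ico (a i) (a i + ℓ))
    (MeasurableSet.univ_pi fun _ => measurableSet_Ico).nullMeasurableSet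
  have h2 : cube a ℓ = (MeasurableEquiv.toLp 2 (Fin n → ℝ)).symm ⁻¹'
      (Set.univ.pi fun i => Set.Ico (a i) (a i + ℓ)) := rfl
  rw [h2, h, volume_pi_pi]
  simp [Real.volume_Ico]

lemma volume_cube' (a : Euc n) {ℓ : ℝ} (hℓ : 0 ≤ ℓ) :
    volume (cube a ℓ) = ENNReal.ofReal ℓ ^ (n : ℝ) := by
  rw [ENNReal.rpow_natCast]; exact volume_cube a hℓ

lemma dist_le_of_mem_cube {a x y : Euc n} {ℓ : ℝ} (hℓ : 0 ≤ ℓ)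
    (hx : x ∈ cube a ℓ) (hy : y ∈ cube a ℓ) : dist x y ≤ Real.sqrt n * ℓ := by
  have key : ∀ i, dist (x i) (y i) ≤ ℓ := by
    intro i
    have h1 := Set.mem_preimage.mp hx i (Set.mem_univ i)
    have h2 := Set.mem_preimage.mp hy i (Set.mem_univ i)
    rw [Real.dist_eq, abs_sub_le_iff]
    constructor <;>
      · simp only [Set.mem_Ico] at h1 h2; linarith [h1.1, h1.2, h2.1, h2.2]
  rw [EuclideanSpace.dist_eq]
  have hsum : ∑ i, dist (x i) (y i) ^ 2 ≤ n * ℓ ^ 2 := by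
    calc ∑ i, dist (x i) (y i) ^ 2 ≤ ∑ _i : Fin n, ℓ ^ 2 :=
          Finset.sum_le_sum fun i _ => by
            have := key i; nlinarith [dist_nonneg (x := x i) (y := y i)]
      _ = n * ℓ ^ 2 := by simp [mul_comm]
  calc Real.sqrt (∑ i, dist (x i) (y i) ^ 2) ≤ Real.sqrt (n * ℓ ^ 2) := Real.sqrt_le_sqrt hsum
    _ = Real.sqrt n * ℓ := by
        rw [Real.sqrt_mul (Nat.cast_nonneg n), Real.sqrt_sq hℓ]

lemma cube_subset_closedBall {a x : Euc n} {ℓ : ℝ} (hℓ : 0 ≤ ℓ)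
    (hx : x ∈ cube a ℓ) : cube a ℓ ⊆ Metric.closedBall x (Real.sqrt n * ℓ) :=
  fun y hy => by simpa [Metric.mem_closedBall, dist_comm] using dist_le_of_mem_cube hℓ hy hx

lemma closedBall_subset_cube {x : Euc n} {r : ℝ} (hr : 0 < r) :
    Metric.closedBall x r ⊆ cube (WithLp.toLp 2 (fun i => x i - r)) (3 * r) := by
  intro y hy i _
  have hco : dist (y i) (x i) ≤ r := by
    have h := EuclideanSpace.dist_eq y x
    have h2 : dist (y i) (x i) ^ 2 ≤ ∑ j, dist (y j) (x j) ^ 2 :=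
      Finset.single_le_sum (f := fun j => dist (y j) (x j) ^ 2)
        (fun j _ => sq_nonneg _) (Finset.mem_univ i)
    have h3 : dist y x ≤ r := hy
    nlinarith [dist_nonneg (x := y i) (y := x i), dist_nonneg (x := y) (y := x),
      Real.sq_sqrt (Finset.sum_nonneg fun j (_ : j ∈ Finset.univ) =>
        sq_nonneg (dist (y j) (x j))), h.symm ▸ h3]
  rw [Real.dist_eq, abs_le] at hco
  constructor <;> simp only [Set.mem_Ico, WithLp.ofLp_toLp] <;> [linarith [hco.1]; linarith [hco.2]]

lemma modularE_ofReal (p : Euc n → ℝ) (hp : ∀ x, 0 ≤ p x) (h : Euc n → ℝ≥0∞) :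
    modularE (fun x => ENNReal.ofReal (p x)) h = ∫⁻ x, h x ^ p x := by
  unfold modularE
  have h1 : {x : Euc n | ENNReal.ofReal (p x) ≠ ∞} = Set.univ := by
    ext x; simp [ENNReal.ofReal_ne_top]
  have h2 : {x : Euc n | ENNReal.ofReal (p x) = ∞} = ∅ := by
    ext x; simp [ENNReal.ofReal_ne_top]
  rw [h1, h2, Measure.restrict_empty, essSup_measure_zero, Measure.restrict_univ]
  simp only [bot_eq_zero, add_zero]
  congr 1
  ext x
  rw [ENNReal.toReal_ofReal (hp x)]

lemma luxNormE_le (p : Euc n → ℝ) (hp : ∀ x, 0 ≤ p x) (h : Euc n → ℝ≥0∞)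
    {l : ℝ≥0∞} (hl : l ≠ 0) (hm : ∫⁻ x, (h x / l) ^ p x ≤ 1) :
    luxNormE (fun x => ENNReal.ofReal (p x)) h ≤ l := by
  apply sInf_le
  exact ⟨hl, by rw [modularE_ofReal p hp]; exact hm⟩

lemma le_luxNormE (p : Euc n → ℝ) (hp : ∀ x, 0 ≤ p x) (h : Euc n → ℝ≥0∞)
    {c : ℝ≥0∞} (hc : ∀ l : ℝ≥0∞, l ≠ 0 → ∫⁻ x, (h x / l) ^ p x ≤ 1 → c ≤ l) :
    c ≤ luxNormE (fun x => ENNReal.ofReal (p x)) h :=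
  le_sInf fun l hl => hc l hl.1 (by have := hl.2; rwa [modularE_ofReal p hp] at this)

lemma luxNormE_mono (p : Euc n → ℝ) (hp : ∀ x, 0 ≤ p x) {h1 h2 : Euc n → ℝ≥0∞}
    (hle : ∀ x, h1 x ≤ h2 x) :
    luxNormE (fun x => ENNReal.ofReal (p x)) h1 ≤ luxNormE (fun x => ENNReal.ofReal (p x)) h2 := by
  apply sInf_le_sInf
  intro l hl
  refine ⟨hl.1, le_trans ?_ hl.2⟩
  rw [modularE_ofReal p hp, modularE_ofReal p hp]
  exact lintegral_mono fun x => ENNReal.rpow_le_rpow (ENNReal.div_le_div_right (hle x) l) (hp x)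

lemma lintegral_indicator_div (p : Euc n → ℝ) (hp : ∀ x, 0 < p x)
    {Q : Set (Euc n)} (hQ : MeasurableSet Q) (h : Euc n → ℝ≥0∞) (l : ℝ≥0∞) :
    ∫⁻ x, (Q.indicator h x / l) ^ p x = ∫⁻ x in Q, (h x / l) ^ p x := by
  rw [← lintegral_indicator hQ]
  congr 1
  ext x
  by_cases hx : x ∈ Q
  · simp [hx]
  · simp [hx, ENNReal.zero_div, ENNReal.zero_rpow_of_pos (hp x)]

end Helpers

set_option maxHeartbeats 2000000 in
open Filter Topology in
/-- Let `p(·) ∈ P(ℝⁿ) ∩ LH(ℝⁿ)` with `p_+ < ∞`. If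
`f ∈ L^{p(·)}(ℝⁿ)`, then `M_{p(·)} f(x) < ∞` for almost every `x ∈ ℝⁿ`. -/
theorem stmt15 {n : ℕ} (p : Euc n → ℝ) (C0 Ci pinf pp : ℝ)
    (hp1 : ∀ x, 1 ≤ p x) (hpp : ∀ x, p x ≤ pp) (hpm : Measurable p)
    (h0 : LocLH p C0) (hi : InfLH p Ci pinf)
    (f : Euc n → ℝ) (hf : Measurable f)
    (hfL : luxNormE (fun x => ENNReal.ofReal (p x)) (fun x => ENNReal.ofReal |f x|) ≠ ∞) :
    ∀ᵐ x : Euc n,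
      MnormAvg (fun x => ENNReal.ofReal (p x)) (fun y => ENNReal.ofReal |f y|) x < ∞ := by
  classical
  set F : Euc n → ℝ≥0∞ := fun y => ENNReal.ofReal |f y| with hFdef
  have hp0 : ∀ x, 0 ≤ p x := fun x => zero_le_one.trans (hp1 x)
  have hppos : ∀ x, 0 < p x := fun x => zero_lt_one.trans_le (hp1 x)
  have hFm : Measurable F := hf.abs.ennreal_ofReal
  set g : Euc n → ℝ≥0∞ := fun y => F y ^ p y with hgdef
  have hgm : Measurable g := hFm.pow hpm
  have hFfin : ∀ y, F y ≠ ∞ := fun _ => ENNReal.ofReal_ne_top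
  set N := luxNormE (fun x => ENNReal.ofReal (p x)) F with hNdef
  have hN : N ≠ ∞ := hfL
  -- `g` is integrable
  have hG : ∫⁻ y, g y ≠ ∞ := by
    obtain ⟨L, hLmem, hLtop⟩ : ∃ L ∈ {l : ℝ≥0∞ | l ≠ 0 ∧
        modularE (fun x => ENNReal.ofReal (p x)) (fun x => F x / l) ≤ 1}, L ≠ ⊤ := by
      by_contra hc; push_neg at hc
      exact hfL (sInf_eq_top.mpr hc)
    obtain ⟨hL0, hLmod⟩ := hLmem
    rw [modularE_ofReal p hp0] at hLmod
    have hFLtop : ∀ y, F y / L ≠ ⊤ := fun y =>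
      ENNReal.mul_ne_top (hFfin y) (ENNReal.inv_ne_top.mpr hL0)
    have hpt : ∀ y, g y ≤ (max L 1) ^ pp * (F y / L) ^ p y := by
      intro y
      have h2 : g y = L ^ p y * (F y / L) ^ p y := by
        rw [hgdef]
        calc F y ^ p y = (F y / L * L) ^ p y := by rw [ENNReal.div_mul_cancel hL0 hLtop]
          _ = (F y / L) ^ p y * L ^ p y := ENNReal.mul_rpow_of_ne_top (hFLtop y) hLtop _
          _ = L ^ p y * (F y / L) ^ p y := mul_comm _ _
      rw [h2]
      apply mul_le_mul_left
      calc L ^ p y ≤ (max L 1) ^ p y := ENNReal.rpow_le_rpow (le_max_left _ _) (hp0 y)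
        _ ≤ (max L 1) ^ pp := ENNReal.rpow_le_rpow_of_exponent_le (le_max_right _ _) (hpp y)
    have hint : ∫⁻ y, g y ≤ (max L 1) ^ pp * ∫⁻ y, (F y / L) ^ p y := by
      rw [← lintegral_const_mul _ ((hFm.div_const L).pow hpm)]
      exact lintegral_mono hpt
    have hle2 : (max L 1) ^ pp * ∫⁻ y, (F y / L) ^ p y ≤ (max L 1) ^ pp * 1 :=
      mul_le_mul_right hLmod _
    refine ne_top_of_le_ne_top ?_ (hint.trans hle2)
    rw [mul_one]
    exact ENNReal.rpow_ne_top_of_nonneg (by linarith [hpp (0 : Euc n), hp1 (0 : Euc n)])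
      (by simp [hLtop])
  -- constants
  set C0' := max C0 0 with hC0def
  have hC00 : 0 ≤ C0' := le_max_right _ _
  set S := Real.sqrt n + 1 with hSdef
  have hS1 : 1 ≤ S := by
    have := Real.sqrt_nonneg (n : ℝ); rw [hSdef]; linarith
  have hSpos : 0 < S := zero_lt_one.trans_le hS1
  set κ := C0' + Real.log S with hκdef
  have hκ0 : 0 ≤ κ := add_nonneg hC00 (Real.log_nonneg hS1)
  set ℓ0 := Real.exp (-(2 * C0' + 2)) / S with hℓ0def
  have hℓ0pos : 0 < ℓ0 := div_pos (Real.exp_pos _) hSpos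
  have hSℓ0 : S * ℓ0 = Real.exp (-(2 * C0' + 2)) := by
    rw [hℓ0def]; field_simp
  have hexplt : Real.exp (-(2 * C0' + 2)) < 1 / 2 := by
    have h1 : Real.exp (-(2 * C0' + 2)) ≤ Real.exp (-2) := Real.exp_le_exp.mpr (by linarith)
    have h2 : (2 : ℝ) + 1 ≤ Real.exp 2 := by
      have := Real.add_one_le_exp (2 : ℝ); linarith
    have h3 : Real.exp (-2) = (Real.exp 2)⁻¹ := Real.exp_neg 2
    rw [h3] at h1
    have h4 : (Real.exp 2)⁻¹ < 1 / 2 := by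
      rw [inv_lt_iff_one_lt_mul₀ (by positivity)]
      nlinarith
    linarith
  have hℓ0lt1 : ℓ0 < 1 := by
    have h1 : ℓ0 ≤ S * ℓ0 := le_mul_of_one_le_left hℓ0pos.le hS1
    rw [hSℓ0] at h1; linarith
  have hlog : ∀ ℓ : ℝ, 0 < ℓ → ℓ ≤ ℓ0 → 2 * C0' + 2 ≤ -Real.log (S * ℓ) := by
    intro ℓ hℓ hle
    have h1 : S * ℓ ≤ Real.exp (-(2 * C0' + 2)) := by
      rw [← hSℓ0]; exact mul_le_mul_of_nonneg_left hle hSpos.le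
    have h2 : Real.log (S * ℓ) ≤ -(2 * C0' + 2) := by
      calc Real.log (S * ℓ) ≤ Real.log (Real.exp (-(2 * C0' + 2))) :=
            Real.log_le_log (by positivity) h1
        _ = -(2 * C0' + 2) := Real.log_exp _
    linarith
  have hosc : ∀ (a : Euc n) (ℓ : ℝ), 0 < ℓ → ℓ ≤ ℓ0 → ∀ x' y', x' ∈ cube a ℓ → y' ∈ cube a ℓ →
      |p y' - p x'| ≤ C0' / (-Real.log (S * ℓ)) := by
    intro a ℓ hℓ hle x' y' hx' hy'
    have hXpos : 0 < -Real.log (S * ℓ) := lt_of_lt_of_le (by linarith) (hlog ℓ hℓ hle)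
    have hd : dist y' x' ≤ S * ℓ := by
      calc dist y' x' ≤ Real.sqrt n * ℓ := dist_le_of_mem_cube hℓ.le hy' hx'
        _ ≤ S * ℓ := by
            apply mul_le_mul_of_nonneg_right _ hℓ.le
            rw [hSdef]; linarith
    rcases eq_or_lt_of_le (dist_nonneg (x := y') (y := x')) with hdeq | hdpos
    · have hyx : y' = x' := dist_eq_zero.mp hdeq.symm
      rw [hyx]
      simp only [sub_self, abs_zero]
      positivity
    · have hSℓlt : S * ℓ ≤ Real.exp (-(2 * C0' + 2)) := by
        rw [← hSℓ0]; exact mul_le_mul_of_nonneg_left hle hSpos.le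
      have hd2 : dist y' x' < 1 / 2 := by linarith
      have h1 : |p y' - p x'| ≤ C0 / (-Real.log (dist y' x')) := h0 y' x' hd2
      have hloglt : -Real.log (S * ℓ) ≤ -Real.log (dist y' x') := by
        have := Real.log_le_log hdpos hd; linarith
      have hdXpos : 0 < -Real.log (dist y' x') := lt_of_lt_of_le hXpos hloglt
      calc |p y' - p x'| ≤ C0 / (-Real.log (dist y' x')) := h1
        _ ≤ C0' / (-Real.log (dist y' x')) :=
            (div_le_div_iff_of_pos_right hdXpos).mpr (le_max_left _ _)
        _ ≤ C0' / (-Real.log (S * ℓ)) := div_le_div_of_nonneg_left hC00 hXpos hloglt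
  have realkey : ∀ ℓ : ℝ, 0 < ℓ → ℓ ≤ ℓ0 → ∀ t : ℝ, 0 ≤ t →
      ℓ ^ (-(t * (C0' / (-Real.log (S * ℓ))))) ≤ Real.exp (t * κ) := by
    intro ℓ hℓ hle t ht
    set X := -Real.log (S * ℓ) with hXdef
    have hX : 2 * C0' + 2 ≤ X := hlog ℓ hℓ hle
    have hXpos : 0 < X := by linarith
    have hδκ : C0' / X * (-Real.log ℓ) ≤ κ := by
      have hlogm : -Real.log ℓ = X + Real.log S := by
        rw [hXdef, Real.log_mul (ne_of_gt hSpos) (ne_of_gt hℓ)]; ring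
      rw [hlogm, hκdef]
      have h2 : C0' / X ≤ 1 := div_le_one_of_le₀ (by linarith) hXpos.le
      have h3 : C0' / X * Real.log S ≤ Real.log S := by
        nlinarith [Real.log_nonneg hS1, div_nonneg hC00 hXpos.le]
      calc C0' / X * (X + Real.log S) = C0' + C0' / X * Real.log S := by
            field_simp
        _ ≤ C0' + Real.log S := by linarith
    rw [Real.rpow_def_of_pos hℓ]
    apply Real.exp_le_exp.mpr
    calc Real.log ℓ * -(t * (C0' / X)) = t * (C0' / X * (-Real.log ℓ)) := by ring
      _ ≤ t * κ := mul_le_mul_of_nonneg_left hδκ ht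
  set Kc := ENNReal.ofReal (Real.exp ((n : ℝ) * κ)) with hKcdef
  have hKc1 : 1 ≤ Kc := by
    rw [hKcdef]; exact ENNReal.one_le_ofReal.mpr (Real.one_le_exp (by positivity))
  have hKctop : Kc ≠ ⊤ := ENNReal.ofReal_ne_top
  have hKc0 : Kc ≠ 0 := by
    intro h; rw [h] at hKc1; simp at hKc1
  set c1 := ENNReal.ofReal (Real.exp (-(2 * (n : ℝ) * κ))) with hc1def
  have hc10 : c1 ≠ 0 := by
    rw [hc1def, ne_eq, ENNReal.ofReal_eq_zero, not_le]
    exact Real.exp_pos _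
  have hc1top : c1 ≠ ⊤ := ENNReal.ofReal_ne_top
  have hc1le1 : c1 ≤ 1 := by
    rw [hc1def]
    exact ENNReal.ofReal_le_one.mpr (Real.exp_le_one_iff.mpr (neg_nonpos.mpr (by positivity)))
  have hind : ∀ (a : Euc n) (ℓ : ℝ) (h : Euc n → ℝ≥0∞) (l : ℝ≥0∞),
      ∫⁻ x, ((cube a ℓ).indicator h x / l) ^ p x = ∫⁻ x in cube a ℓ, (h x / l) ^ p x :=
    fun a ℓ => lintegral_indicator_div p hppos (cube_measurableSet a ℓ)
  -- generic lower bound for the norm of an indicator of a cube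
  have hlower : ∀ (a : Euc n) (ℓ : ℝ), 0 < ℓ → ∀ t : ℝ, 0 < t → (∀ y ∈ cube a ℓ, t ≤ p y) →
      ∀ l : ℝ≥0∞, l ≠ 0 → (∫⁻ x, ((cube a ℓ).indicator (fun _ => (1 : ℝ≥0∞)) x / l) ^ p x) ≤ 1 →
      l < 1 → ENNReal.ofReal ℓ ^ ((n : ℝ) / t) ≤ l := by
    intro a ℓ hℓ t ht hty l hl0 hml hl1
    have hltop : l ≠ ⊤ := (hl1.trans ENNReal.one_lt_top).ne
    rw [hind a ℓ (fun _ => (1 : ℝ≥0∞)) l] at hml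
    have hml' : ∫⁻ y in cube a ℓ, ((1 : ℝ≥0∞) / l) ^ p y ≤ 1 := hml
    have hbase : (1 : ℝ≥0∞) ≤ 1 / l := by
      rw [ENNReal.le_div_iff_mul_le (Or.inl hl0) (Or.inl hltop)]
      simpa using hl1.le
    have hml2 : (1 / l) ^ t * volume (cube a ℓ) ≤ 1 := by
      calc (1 / l) ^ t * volume (cube a ℓ) = ∫⁻ _ in cube a ℓ, (1 / l) ^ t :=
            (setLIntegral_const _ _).symm
        _ ≤ ∫⁻ y in cube a ℓ, ((1 : ℝ≥0∞) / l) ^ p y :=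
            setLIntegral_mono (measurable_const.pow hpm) fun y hy =>
              ENNReal.rpow_le_rpow_of_exponent_le hbase (hty y hy)
        _ ≤ 1 := hml'
    have hvol : volume (cube a ℓ) = ENNReal.ofReal ℓ ^ (n : ℝ) := volume_cube' a hℓ.le
    have hinvtop : 1 / l ≠ ⊤ := by
      rw [one_div]; exact ENNReal.inv_ne_top.mpr hl0
    have hcancel : l ^ t * (1 / l) ^ t = 1 := by
      rw [← ENNReal.mul_rpow_of_ne_top hltop hinvtop, one_div,
        ENNReal.mul_inv_cancel hl0 hltop, ENNReal.one_rpow]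
    have h2 : ENNReal.ofReal ℓ ^ (n : ℝ) ≤ l ^ t := by
      calc ENNReal.ofReal ℓ ^ (n : ℝ) = volume (cube a ℓ) := hvol.symm
        _ = l ^ t * ((1 / l) ^ t * volume (cube a ℓ)) := by rw [← mul_assoc, hcancel, one_mul]
        _ ≤ l ^ t * 1 := mul_le_mul_right hml2 _
        _ = l ^ t := mul_one _
    have h3 := ENNReal.rpow_le_rpow h2 (le_of_lt (by positivity : (0 : ℝ) < 1 / t))
    rw [← ENNReal.rpow_mul, ← ENNReal.rpow_mul,
      show (n : ℝ) * (1 / t) = (n : ℝ) / t by ring,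
      show t * (1 / t) = 1 by field_simp, ENNReal.rpow_one] at h3
    exact h3
  -- the density measure
  set ρ := volume.withDensity g with hρdef
  haveI hρfin : IsFiniteMeasure ρ := by
    constructor
    rw [hρdef, withDensity_apply g MeasurableSet.univ, Measure.restrict_univ]
    exact hG.lt_top
  have hbes := Besicovitch.ae_tendsto_rnDeriv ρ volume
  have hrn := Measure.rnDeriv_lt_top ρ volume
  filter_upwards [hbes, hrn] with x htend hrnx
  set Lx := ρ.rnDeriv volume x with hLxdef
  have hev : ∀ᶠ r in 𝓝[>] (0 : ℝ),
      ρ (Metric.closedBall x r) / volume (Metric.closedBall x r) < Lx + 1 :=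
    htend.eventually_lt_const (ENNReal.lt_add_right hrnx.ne one_ne_zero)
  obtain ⟨ε, hε, hevP⟩ : ∃ ε > 0, ∀ r, 0 < r → r < ε →
      ρ (Metric.closedBall x r) / volume (Metric.closedBall x r) < Lx + 1 := by
    rw [eventually_nhdsWithin_iff, Metric.eventually_nhds_iff] at hev
    obtain ⟨ε, hε, h⟩ := hev
    exact ⟨ε, hε, fun r hr hrε => h (by simpa [abs_of_pos hr] using hrε) hr⟩
  set m := min (ε / (2 * S)) ℓ0 with hmdef
  have hmpos : 0 < m := lt_min (by positivity) hℓ0pos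
  set A := (Lx + 1) * ENNReal.ofReal ((3 * S) ^ n) +
      (∫⁻ y, g y) / ENNReal.ofReal m ^ (n : ℝ) + 1 with hAdef
  have hA1 : 1 ≤ A := le_add_self
  have hA0 : A ≠ 0 := by
    intro h; rw [h] at hA1; simp at hA1
  have hAtop : A ≠ ⊤ := by
    rw [hAdef]
    refine ENNReal.add_ne_top.mpr ⟨ENNReal.add_ne_top.mpr ⟨?_, ?_⟩, ENNReal.one_ne_top⟩
    · exact ENNReal.mul_ne_top (ENNReal.add_ne_top.mpr ⟨hrnx.ne, ENNReal.one_ne_top⟩)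
        ENNReal.ofReal_ne_top
    · refine (ENNReal.div_lt_top hG ?_).ne
      exact (ENNReal.rpow_pos (ENNReal.ofReal_pos.mpr hmpos) ENNReal.ofReal_ne_top).ne'
  have HxQ : ∀ (a : Euc n) (ℓ : ℝ), 0 < ℓ → ℓ ≤ ℓ0 → x ∈ cube a ℓ →
      ∫⁻ y in cube a ℓ, g y ≤ A * ENNReal.ofReal ℓ ^ (n : ℝ) := by
    intro a ℓ hℓ hle hx
    have hQm := cube_measurableSet a ℓ
    have heq : ∫⁻ y in cube a ℓ, g y = ρ (cube a ℓ) := (withDensity_apply g hQm).symm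
    have hsub : cube a ℓ ⊆ Metric.closedBall x (S * ℓ) := by
      refine (cube_subset_closedBall hℓ.le hx).trans (Metric.closedBall_subset_closedBall ?_)
      apply mul_le_mul_of_nonneg_right _ hℓ.le
      rw [hSdef]; linarith
    rw [heq]
    rcases lt_or_ge (S * ℓ) ε with hcase | hcase
    · have h1 := hevP (S * ℓ) (by positivity) hcase
      have hvol0 : volume (Metric.closedBall x (S * ℓ)) ≠ 0 :=
        (Metric.measure_closedBall_pos volume x (by positivity)).ne'
      have hvoltop : volume (Metric.closedBall x (S * ℓ)) ≠ ⊤ := measure_closedBall_lt_top.ne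
      have h2 : ρ (Metric.closedBall x (S * ℓ)) ≤ (Lx + 1) * volume (Metric.closedBall x (S * ℓ)) :=
        (ENNReal.div_le_iff hvol0 hvoltop).mp h1.le
      have h3 : volume (Metric.closedBall x (S * ℓ)) ≤ ENNReal.ofReal (3 * (S * ℓ)) ^ n := by
        calc volume (Metric.closedBall x (S * ℓ)) ≤
              volume (cube (WithLp.toLp 2 (fun i => x i - S * ℓ)) (3 * (S * ℓ))) :=
              measure_mono (closedBall_subset_cube (by positivity))
          _ = ENNReal.ofReal (3 * (S * ℓ)) ^ n := volume_cube _ (by positivity)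
      have h4 : ENNReal.ofReal (3 * (S * ℓ)) ^ n =
          ENNReal.ofReal ((3 * S) ^ n) * ENNReal.ofReal ℓ ^ (n : ℝ) := by
        rw [ENNReal.rpow_natCast, ← ENNReal.ofReal_pow (by positivity),
          ← ENNReal.ofReal_pow hℓ.le, ← ENNReal.ofReal_mul (by positivity), ← mul_pow]
        ring_nf
      calc ρ (cube a ℓ) ≤ ρ (Metric.closedBall x (S * ℓ)) := measure_mono hsub
        _ ≤ (Lx + 1) * (ENNReal.ofReal ((3 * S) ^ n) * ENNReal.ofReal ℓ ^ (n : ℝ)) := by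
            rw [← h4]; exact h2.trans (mul_le_mul_right h3 _)
        _ = (Lx + 1) * ENNReal.ofReal ((3 * S) ^ n) * ENNReal.ofReal ℓ ^ (n : ℝ) := by ring
        _ ≤ A * ENNReal.ofReal ℓ ^ (n : ℝ) := by
            apply mul_le_mul_left
            rw [hAdef]
            exact le_add_right (le_add_right le_rfl)
    · have hmℓ : m ≤ ℓ := by
        have h1 : ε / S ≤ ℓ := by
          rw [div_le_iff₀ hSpos]; rw [mul_comm] at hcase; linarith
        calc m ≤ ε / (2 * S) := min_le_left _ _
          _ ≤ ε / S := by
              apply div_le_div_of_nonneg_left hε.le hSpos; linarith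
          _ ≤ ℓ := h1
      have h5 : ENNReal.ofReal m ^ (n : ℝ) ≤ ENNReal.ofReal ℓ ^ (n : ℝ) :=
        ENNReal.rpow_le_rpow (ENNReal.ofReal_le_ofReal hmℓ) (Nat.cast_nonneg n)
      have hm0 : ENNReal.ofReal m ^ (n : ℝ) ≠ 0 :=
        (ENNReal.rpow_pos (ENNReal.ofReal_pos.mpr hmpos) ENNReal.ofReal_ne_top).ne'
      have hmtop : ENNReal.ofReal m ^ (n : ℝ) ≠ ⊤ :=
        ENNReal.rpow_ne_top_of_nonneg (Nat.cast_nonneg n) ENNReal.ofReal_ne_top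
      calc ρ (cube a ℓ) ≤ ρ Set.univ := measure_mono (Set.subset_univ _)
        _ = ∫⁻ y, g y := by
            rw [hρdef, withDensity_apply g MeasurableSet.univ, Measure.restrict_univ]
        _ = (∫⁻ y, g y) / ENNReal.ofReal m ^ (n : ℝ) * ENNReal.ofReal m ^ (n : ℝ) :=
            (ENNReal.div_mul_cancel hm0 hmtop).symm
        _ ≤ A * ENNReal.ofReal ℓ ^ (n : ℝ) := by
            apply mul_le_mul' ?_ h5
            rw [hAdef]
            exact le_add_right (le_add_left le_rfl)
  -- the scaling parameter
  set lam := (Kc * A) ^ (2 : ℝ) with hlamdef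
  have hKA1 : 1 ≤ Kc * A := by
    calc (1 : ℝ≥0∞) = 1 * 1 := (one_mul 1).symm
      _ ≤ Kc * A := mul_le_mul' hKc1 hA1
  have hKAtop : Kc * A ≠ ⊤ := ENNReal.mul_ne_top hKctop hAtop
  have hKA0 : Kc * A ≠ 0 := mul_ne_zero hKc0 hA0
  have hlam1 : 1 ≤ lam := ENNReal.one_le_rpow hKA1 (by norm_num)
  have hlamtop : lam ≠ ⊤ := ENNReal.rpow_ne_top_of_nonneg (by norm_num) hKAtop
  have hlam0 : lam ≠ 0 := by
    intro h; rw [h] at hlam1; simp at hlam1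
  have hlamhalf : lam ^ ((1 : ℝ) / 2) = Kc * A := by
    rw [hlamdef, ← ENNReal.rpow_mul]
    norm_num
  set v0 := ENNReal.ofReal ℓ0 ^ (n : ℝ) with hv0def
  have hv00 : v0 ≠ 0 :=
    (ENNReal.rpow_pos (ENNReal.ofReal_pos.mpr hℓ0pos) ENNReal.ofReal_ne_top).ne'
  have hv0top : v0 ≠ ⊤ := ENNReal.rpow_ne_top_of_nonneg (Nat.cast_nonneg n) ENNReal.ofReal_ne_top
  have hv01 : v0 ≤ 1 :=
    ENNReal.rpow_le_one (ENNReal.ofReal_le_one.mpr hℓ0lt1.le) (Nat.cast_nonneg n)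
  -- the key per-cube estimate
  have hratio : ∀ (a : Euc n) (ℓ : ℝ), 0 < ℓ → x ∈ cube a ℓ →
      luxNormE (fun x => ENNReal.ofReal (p x)) (fun y => (cube a ℓ).indicator F y) ≤
        (N / v0 + lam / c1) *
          luxNormE (fun x => ENNReal.ofReal (p x)) ((cube a ℓ).indicator fun _ => 1) := by
    intro a ℓ hℓ hx
    rcases le_or_gt ℓ ℓ0 with hsmall | hbig
    · -- small cubes
      set s := p x with hsdef
      have hs1 : 1 ≤ s := hp1 x
      have hspos : 0 < s := by linarith
      set δ := C0' / (-Real.log (S * ℓ)) with hδdef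
      have hXpos : 0 < -Real.log (S * ℓ) := lt_of_lt_of_le (by linarith) (hlog ℓ hℓ hsmall)
      have hδ0 : 0 ≤ δ := div_nonneg hC00 hXpos.le
      have hδhalf : δ ≤ 1 / 2 := by
        rw [hδdef, div_le_iff₀ hXpos]
        have := hlog ℓ hℓ hsmall
        nlinarith
      have hoscx : ∀ y ∈ cube a ℓ, |p y - s| ≤ δ := fun y hy => hosc a ℓ hℓ hsmall x y hx hy
      have htpos : 0 < s - δ := by linarith
      set μq := ENNReal.ofReal ℓ ^ ((n : ℝ) / s) with hμdef
      have hℓlt1 : ℓ < 1 := lt_of_le_of_lt hsmall hℓ0lt1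
      have hoℓ0 : ENNReal.ofReal ℓ ≠ 0 := (ENNReal.ofReal_pos.mpr hℓ).ne'
      have hμ0 : μq ≠ 0 :=
        (ENNReal.rpow_pos (ENNReal.ofReal_pos.mpr hℓ) ENNReal.ofReal_ne_top).ne'
      have hμtop : μq ≠ ⊤ :=
        ENNReal.rpow_ne_top_of_nonneg (by positivity) ENNReal.ofReal_ne_top
      have hμ1 : μq ≤ 1 :=
        ENNReal.rpow_le_one (ENNReal.ofReal_le_one.mpr hℓlt1.le) (by positivity)
      have hμs : μq ^ s = ENNReal.ofReal ℓ ^ (n : ℝ) := by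
        rw [hμdef, ← ENNReal.rpow_mul, div_mul_cancel₀ _ (ne_of_gt hspos)]
      have hμδ : μq ^ (-δ) ≤ Kc := by
        rw [hμdef, ← ENNReal.rpow_mul, ENNReal.ofReal_rpow_of_pos hℓ, hKcdef]
        apply ENNReal.ofReal_le_ofReal
        rw [show (n : ℝ) / s * (-δ) = -((n : ℝ) / s * δ) by ring]
        calc ℓ ^ (-((n : ℝ) / s * δ)) ≤ Real.exp ((n : ℝ) / s * κ) :=
              realkey ℓ hℓ hsmall ((n : ℝ) / s) (by positivity)
          _ ≤ Real.exp ((n : ℝ) * κ) := by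
              apply Real.exp_le_exp.mpr
              apply mul_le_mul_of_nonneg_right _ hκ0
              exact div_le_self (Nat.cast_nonneg n) hs1
      have hc1b : c1 ≤ ENNReal.ofReal ℓ ^ (2 * (n : ℝ) * δ) := by
        rw [ENNReal.ofReal_rpow_of_pos hℓ, hc1def]
        apply ENNReal.ofReal_le_ofReal
        have h1 := realkey ℓ hℓ hsmall (2 * (n : ℝ)) (by positivity)
        have h2 : ℓ ^ (-(2 * (n : ℝ) * δ)) = (ℓ ^ (2 * (n : ℝ) * δ))⁻¹ :=
          Real.rpow_neg hℓ.le _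
        rw [show -(2 * (n : ℝ) * (C0' / (-Real.log (S * ℓ)))) = -(2 * (n : ℝ) * δ) by
          rw [hδdef], h2] at h1
        have h3 : 0 < ℓ ^ (2 * (n : ℝ) * δ) := Real.rpow_pos_of_pos hℓ _
        have h4 : 1 ≤ ℓ ^ (2 * (n : ℝ) * δ) * Real.exp (2 * (n : ℝ) * κ) := by
          have h5 := mul_le_mul_of_nonneg_left h1 h3.le
          rwa [mul_inv_cancel₀ (ne_of_gt h3)] at h5
        rw [Real.exp_neg, inv_eq_one_div, div_le_iff₀ (Real.exp_pos _)]
        nlinarith [h4]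
      -- lower bound for the norm of the indicator of the cube
      have hlowS : μq * c1 ≤
          luxNormE (fun x => ENNReal.ofReal (p x)) ((cube a ℓ).indicator fun _ => 1) := by
        apply le_luxNormE p hp0
        intro l hl0 hml
        rcases lt_or_ge l 1 with hl1 | hl1
        · have hty : ∀ y ∈ cube a ℓ, s - δ ≤ p y := by
            intro y hy
            have hb := hoscx y hy
            rw [abs_le] at hb
            linarith [hb.1]
          have h1 := hlower a ℓ hℓ (s - δ) htpos hty l hl0 hml hl1
          refine le_trans ?_ h1
          have hsplit : ENNReal.ofReal ℓ ^ ((n : ℝ) / (s - δ)) =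
              μq * ENNReal.ofReal ℓ ^ ((n : ℝ) / (s - δ) - (n : ℝ) / s) := by
            rw [hμdef, ← ENNReal.rpow_add _ _ hoℓ0 ENNReal.ofReal_ne_top]
            congr 1
            ring
          rw [hsplit]
          apply mul_le_mul_right
          refine le_trans hc1b (ENNReal.rpow_le_rpow_of_exponent_ge
            (ENNReal.ofReal_le_one.mpr hℓlt1.le) ?_)
          rw [div_sub_div _ _ (ne_of_gt htpos) (ne_of_gt hspos), div_le_iff₀ (by positivity)]
          have hss : (1 : ℝ) / 2 ≤ (s - δ) * s := by nlinarith
          have hnδ : 0 ≤ (n : ℝ) * δ := mul_nonneg (Nat.cast_nonneg n) hδ0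
          nlinarith [mul_nonneg hnδ (by linarith : (0 : ℝ) ≤ 2 * ((s - δ) * s) - 1)]
        · refine le_trans ?_ hl1
          calc μq * c1 ≤ 1 * 1 := mul_le_mul' hμ1 hc1le1
            _ = 1 := one_mul 1
      -- upper bound for the norm of f restricted to the cube
      have huppS : luxNormE (fun x => ENNReal.ofReal (p x))
          (fun y => (cube a ℓ).indicator F y) ≤ lam * μq := by
        set l := lam * μq with hldef
        have hl0 : l ≠ 0 := mul_ne_zero hlam0 hμ0
        have hltop : l ≠ ⊤ := ENNReal.mul_ne_top hlamtop hμtop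
        apply luxNormE_le p hp0 _ hl0
        show ∫⁻ y, ((cube a ℓ).indicator F y / l) ^ p y ≤ 1
        rw [hind a ℓ F l]
        set D := (l ^ s)⁻¹ * (Kc * lam ^ ((1 : ℝ) / 2)) with hDdef
        have hls0 : l ^ s ≠ 0 := (ENNReal.rpow_pos (zero_lt_iff.mpr hl0) hltop).ne'
        have hlstop : l ^ s ≠ ⊤ := ENNReal.rpow_ne_top_of_nonneg hspos.le hltop
        have hpt : ∀ y ∈ cube a ℓ, (F y / l) ^ p y ≤ g y * D := by
          intro y hy
          have hosy := hoscx y hy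
          rw [abs_le] at hosy
          have hls : l ^ s ≤ l ^ p y * (Kc * lam ^ ((1 : ℝ) / 2)) := by
            have hsum : l ^ s = l ^ p y * l ^ (s - p y) := by
              rw [← ENNReal.rpow_add _ _ hl0 hltop]
              congr 1
              ring
            rw [hsum]
            apply mul_le_mul_right
            rw [hldef, ENNReal.mul_rpow_of_ne_top hlamtop hμtop]
            have h1 : lam ^ (s - p y) ≤ lam ^ ((1 : ℝ) / 2) :=
              ENNReal.rpow_le_rpow_of_exponent_le hlam1 (by linarith [hosy.1, hδhalf])
            have h2 : μq ^ (s - p y) ≤ μq ^ (-δ) :=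
              ENNReal.rpow_le_rpow_of_exponent_ge hμ1 (by linarith [hosy.2])
            calc lam ^ (s - p y) * μq ^ (s - p y) ≤ lam ^ ((1 : ℝ) / 2) * Kc :=
                  mul_le_mul' h1 (h2.trans hμδ)
              _ = Kc * lam ^ ((1 : ℝ) / 2) := mul_comm _ _
          have hpy0 : l ^ p y ≠ 0 := (ENNReal.rpow_pos (zero_lt_iff.mpr hl0) hltop).ne'
          have hpytop : l ^ p y ≠ ⊤ := ENNReal.rpow_ne_top_of_nonneg (hp0 y) hltop
          have hinv : (l ^ p y)⁻¹ ≤ D := by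
            rw [hDdef]
            calc (l ^ p y)⁻¹ = (l ^ p y)⁻¹ * ((l ^ s)⁻¹ * l ^ s) := by
                  rw [ENNReal.inv_mul_cancel hls0 hlstop, mul_one]
              _ ≤ (l ^ p y)⁻¹ * ((l ^ s)⁻¹ * (l ^ p y * (Kc * lam ^ ((1 : ℝ) / 2)))) :=
                  mul_le_mul_right (mul_le_mul_right hls _) _
              _ = (l ^ p y)⁻¹ * l ^ p y * ((l ^ s)⁻¹ * (Kc * lam ^ ((1 : ℝ) / 2))) := by
                  ring
              _ = (l ^ s)⁻¹ * (Kc * lam ^ ((1 : ℝ) / 2)) := by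
                  rw [ENNReal.inv_mul_cancel hpy0 hpytop, one_mul]
          calc (F y / l) ^ p y = F y ^ p y * (l ^ p y)⁻¹ := by
                rw [ENNReal.div_rpow_of_nonneg _ _ (hp0 y), div_eq_mul_inv]
            _ ≤ F y ^ p y * D := mul_le_mul_right hinv _
            _ = g y * D := rfl
        have hint : ∫⁻ y in cube a ℓ, (F y / l) ^ p y ≤ (∫⁻ y in cube a ℓ, g y) * D := by
          calc ∫⁻ y in cube a ℓ, (F y / l) ^ p y ≤ ∫⁻ y in cube a ℓ, g y * D :=
                setLIntegral_mono (hgm.mul_const D) hpt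
            _ = (∫⁻ y in cube a ℓ, g y) * D := lintegral_mul_const D hgm
        refine le_trans hint ?_
        have hQg := HxQ a ℓ hℓ hsmall hx
        have hX0 : ENNReal.ofReal ℓ ^ (n : ℝ) ≠ 0 :=
          (ENNReal.rpow_pos (ENNReal.ofReal_pos.mpr hℓ) ENNReal.ofReal_ne_top).ne'
        have hXtop : ENNReal.ofReal ℓ ^ (n : ℝ) ≠ ⊤ :=
          ENNReal.rpow_ne_top_of_nonneg (Nat.cast_nonneg n) ENNReal.ofReal_ne_top
        have hfinal : A * ENNReal.ofReal ℓ ^ (n : ℝ) * D ≤ 1 := by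
          have hlspow : l ^ s = lam ^ s * ENNReal.ofReal ℓ ^ (n : ℝ) := by
            rw [hldef, ENNReal.mul_rpow_of_ne_top hlamtop hμtop, hμs]
          have hlams0 : lam ^ s ≠ 0 := (ENNReal.rpow_pos (zero_lt_iff.mpr hlam0) hlamtop).ne'
          have hlamstop : lam ^ s ≠ ⊤ := ENNReal.rpow_ne_top_of_nonneg hspos.le hlamtop
          rw [hDdef, hlspow, ENNReal.mul_inv (Or.inl hlams0) (Or.inl hlamstop)]
          calc A * ENNReal.ofReal ℓ ^ (n : ℝ) *
                ((lam ^ s)⁻¹ * (ENNReal.ofReal ℓ ^ (n : ℝ))⁻¹ * (Kc * lam ^ ((1 : ℝ) / 2))) =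
              ENNReal.ofReal ℓ ^ (n : ℝ) * (ENNReal.ofReal ℓ ^ (n : ℝ))⁻¹ *
                (Kc * A * (lam ^ ((1 : ℝ) / 2) * (lam ^ s)⁻¹)) := by ring
            _ = Kc * A * (lam ^ ((1 : ℝ) / 2) * (lam ^ s)⁻¹) := by
                rw [ENNReal.mul_inv_cancel hX0 hXtop, one_mul]
            _ ≤ Kc * A * (Kc * A)⁻¹ := by
                apply mul_le_mul_right
                have e1 : lam ^ ((1 : ℝ) / 2) * (lam ^ s)⁻¹ = lam ^ ((1 : ℝ) / 2 - s) := by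
                  rw [← ENNReal.rpow_neg, ← ENNReal.rpow_add _ _ hlam0 hlamtop]
                  congr 1 <;> ring
                have e3 : lam ^ (-((1 : ℝ) / 2)) = (Kc * A)⁻¹ := by
                  rw [ENNReal.rpow_neg, hlamhalf]
                rw [e1, ← e3]
                exact ENNReal.rpow_le_rpow_of_exponent_le hlam1 (by linarith)
            _ ≤ 1 := by
                rw [ENNReal.mul_inv_cancel hKA0 hKAtop]
        calc (∫⁻ y in cube a ℓ, g y) * D ≤ A * ENNReal.ofReal ℓ ^ (n : ℝ) * D :=
              mul_le_mul_left hQg D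
          _ ≤ 1 := hfinal
      -- combine
      calc luxNormE (fun x => ENNReal.ofReal (p x)) (fun y => (cube a ℓ).indicator F y)
          ≤ lam * μq := huppS
        _ = lam / c1 * (μq * c1) := by
            rw [mul_comm μq c1, ← mul_assoc, ENNReal.div_mul_cancel hc10 hc1top]
        _ ≤ (N / v0 + lam / c1) *
              luxNormE (fun x => ENNReal.ofReal (p x)) ((cube a ℓ).indicator fun _ => 1) :=
            mul_le_mul' (le_add_left le_rfl) hlowS
    · -- large cubes
      have hup : luxNormE (fun x => ENNReal.ofReal (p x))
          (fun y => (cube a ℓ).indicator F y) ≤ N := by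
        rw [hNdef]
        exact luxNormE_mono p hp0 fun y => Set.indicator_le_self _ _ y
      have hlow : v0 ≤
          luxNormE (fun x => ENNReal.ofReal (p x)) ((cube a ℓ).indicator fun _ => 1) := by
        apply le_luxNormE p hp0
        intro l hl0 hml
        rcases lt_or_ge l 1 with hl1 | hl1
        · have h1 := hlower a ℓ hℓ 1 one_pos (fun y _ => hp1 y) l hl0 hml hl1
          rw [div_one] at h1
          refine le_trans ?_ h1
          exact ENNReal.rpow_le_rpow (ENNReal.ofReal_le_ofReal hbig.le) (Nat.cast_nonneg n)
        · exact le_trans hv01 hl1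
      calc luxNormE (fun x => ENNReal.ofReal (p x)) (fun y => (cube a ℓ).indicator F y)
          ≤ N := hup
        _ = N / v0 * v0 := (ENNReal.div_mul_cancel hv00 hv0top).symm
        _ ≤ (N / v0 + lam / c1) *
              luxNormE (fun x => ENNReal.ofReal (p x)) ((cube a ℓ).indicator fun _ => 1) :=
            mul_le_mul' (le_add_right le_rfl) hlow
  -- conclusion
  have hBtop : N / v0 + lam / c1 ≠ ⊤ :=
    ENNReal.add_ne_top.mpr ⟨(ENNReal.div_lt_top hN hv00).ne, (ENNReal.div_lt_top hlamtop hc10).ne⟩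
  have hsup : MnormAvg (fun x => ENNReal.ofReal (p x)) F x ≤ N / v0 + lam / c1 := by
    rw [MnormAvg]
    apply iSup_le; intro a
    apply iSup_le; intro ℓ
    apply iSup_le; intro hℓ
    apply iSup_le; intro hx
    exact ENNReal.div_le_of_le_mul (hratio a ℓ hℓ hx)
  exact lt_of_le_of_lt hsup hBtop.lt_top
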